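/- arXiv:1008.3448 — 2 statements merged into one kernel-verified Lean document; each statement's English description precedes it below -/
import Mathlib

section
/- Let R be a semihyperring with a multiplicative identity 1 and let I be a hyperideal of R. Then the following are equivalent: (1) I is a prime hyperideal; (2) for all a, b ∈ R: {a·r·b : r ∈ R} ⊆ I if and only if a ∈ I or b ∈ I; (3) for all a, b ∈ R: ⟨a⟩⟨b⟩ ⊆ I implies a ∈ I or b ∈ I, where ⟨x⟩ denotes the hyperideal generated by x. -/
/-- A semihyperring `(R, +, ·, 0)`: `+` is a hyperoperation (into nonempty sets),
`·` is an associative single-valued multiplication distributing over `+`,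
and `0` is an additive identity and multiplicative absorbing element. -/
class Semihyperring (R : Type*) extends Mul R, Zero R where
  /-- hyperaddition -/
  hadd : R → R → Set R
  hadd_nonempty : ∀ a b : R, (hadd a b).Nonempty
  hadd_comm : ∀ a b : R, hadd a b = hadd b a
  hadd_assoc : ∀ a b c : R, (⋃ x ∈ hadd a b, hadd x c) = ⋃ x ∈ hadd b c, hadd a x
  hadd_zero : ∀ a : R, hadd a 0 = {a}
  mul_assoc' : ∀ a b c : R, a * b * c = a * (b * c)
  left_distrib' : ∀ a b c : R, (fun x => a * x) '' hadd b c = hadd (a * b) (a * c)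
  right_distrib' : ∀ a b c : R, (fun x => x * c) '' hadd a b = hadd (a * c) (b * c)
  mul_zero' : ∀ a : R, a * 0 = 0
  zero_mul' : ∀ a : R, 0 * a = 0

namespace Semihyperring

variable {R : Type*} [Semihyperring R]

/-- Hyperaddition extended to sets: `A + B = ⋃_{a∈A, b∈B} (a + b)`. -/
def hAddSet (A B : Set R) : Set R := ⋃ a ∈ A, ⋃ b ∈ B, hadd a b

/-- The hypersum `x₁ + x₂ + ⋯ + xₙ` of a list of elements (as a set);
the empty hypersum is `{0}`, so `hSum [x] = {x}`. -/
def hSum : List R → Set R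
  | [] => {0}
  | x :: xs => hAddSet {x} (hSum xs)

/-- A left hyperideal. -/
def IsLeftHyperideal (I : Set R) : Prop :=
  I.Nonempty ∧ (∀ a ∈ I, ∀ b ∈ I, hadd a b ⊆ I) ∧ ∀ a ∈ I, ∀ r : R, r * a ∈ I

/-- A right hyperideal. -/
def IsRightHyperideal (I : Set R) : Prop :=
  I.Nonempty ∧ (∀ a ∈ I, ∀ b ∈ I, hadd a b ⊆ I) ∧ ∀ a ∈ I, ∀ r : R, a * r ∈ I

/-- A (two-sided) hyperideal. -/
def IsHyperideal (I : Set R) : Prop :=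
  I.Nonempty ∧ (∀ a ∈ I, ∀ b ∈ I, hadd a b ⊆ I) ∧ ∀ a ∈ I, ∀ r : R, r * a ∈ I ∧ a * r ∈ I

/-- The product `HK`: union of all finite hypersums `a₁·b₁ + ⋯ + aₙ·bₙ` (n ≥ 1)
with `aᵢ ∈ H`, `bᵢ ∈ K`. -/
def hProd (H K : Set R) : Set R :=
  ⋃ (l : List (R × R)) (_ : l ≠ []) (_ : ∀ p ∈ l, p.1 ∈ H ∧ p.2 ∈ K),
    hSum (l.map fun p => p.1 * p.2)

/-- The hyperideal generated by an element. -/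
def genHyperideal (a : R) : Set R := ⋂₀ {I : Set R | IsHyperideal I ∧ a ∈ I}

/-- A prime hyperideal. -/
def IsPrimeHyperideal (P : Set R) : Prop :=
  IsHyperideal P ∧
    ∀ A B : Set R, IsHyperideal A → IsHyperideal B → hProd A B ⊆ P → A ⊆ P ∨ B ⊆ P

/-- A semiprime hyperideal. -/
def IsSemiprimeHyperideal (I : Set R) : Prop :=
  IsHyperideal I ∧ ∀ H : Set R, IsHyperideal H → hProd H H ⊆ I → H ⊆ I

/-- A strongly irreducible hyperideal. -/
def IsStronglyIrreducibleHyperideal (I : Set R) : Prop :=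
  IsHyperideal I ∧
    ∀ H K : Set R, IsHyperideal H → IsHyperideal K → H ∩ K ⊆ I → H ⊆ I ∨ K ⊆ I

/-- An irreducible hyperideal. -/
def IsIrreducibleHyperideal (I : Set R) : Prop :=
  IsHyperideal I ∧
    ∀ H K : Set R, IsHyperideal H → IsHyperideal K → I = H ∩ K → I = H ∨ I = K

/-- `a·R`: the union of all finite hypersums `a·r₁ + ⋯ + a·rₙ` (n ≥ 1) with `rᵢ ∈ R`. -/
def rightMulSet (a : R) : Set R :=
  ⋃ (l : List R) (_ : l ≠ []), hSum (l.map fun r => a * r)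

end Semihyperring

namespace Semihyperring

variable {R : Type*} [Semihyperring R]

lemma zero_mem' {I : Set R} (hI : IsHyperideal I) : (0 : R) ∈ I := by
  obtain ⟨⟨a, ha⟩, _, hmul⟩ := hI
  have := (hmul a ha 0).2
  rwa [mul_zero'] at this

lemma mem_hAddSet {A B : Set R} {z : R} :
    z ∈ hAddSet A B ↔ ∃ a ∈ A, ∃ b ∈ B, z ∈ hadd a b := by
  simp [hAddSet]

lemma hAddSet_singleton (x : R) (S : Set R) : hAddSet {x} S = ⋃ b ∈ S, hadd x b := by
  simp [hAddSet]

lemma hadd_zero_left (b : R) : hadd (0 : R) b = {b} := by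
  rw [hadd_comm, hadd_zero]

lemma hAddSet_zero_left (S : Set R) : hAddSet {0} S = S := by
  ext z; simp [hAddSet, hadd_zero_left]

lemma hSum_singleton (x : R) : hSum [x] = {x} := by
  have : hSum [x] = hAddSet {x} {0} := rfl
  rw [this]; ext z; simp [hAddSet, hadd_zero]

lemma hAddSet_assoc (A B C : Set R) :
    hAddSet (hAddSet A B) C = hAddSet A (hAddSet B C) := by
  ext z
  simp only [mem_hAddSet]
  constructor
  · rintro ⟨x, ⟨a, ha, b, hb, hx⟩, c, hc, hz⟩
    have h1 : z ∈ ⋃ x ∈ hadd a b, hadd x c := Set.mem_biUnion hx hz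
    rw [hadd_assoc] at h1
    obtain ⟨y, hy, hzy⟩ := Set.mem_iUnion₂.1 h1
    exact ⟨a, ha, y, ⟨b, hb, c, hc, hy⟩, hzy⟩
  · rintro ⟨a, ha, y, ⟨b, hb, c, hc, hy⟩, hz⟩
    have h1 : z ∈ ⋃ x ∈ hadd b c, hadd a x := Set.mem_biUnion hy hz
    rw [← hadd_assoc] at h1
    obtain ⟨x, hx, hzx⟩ := Set.mem_iUnion₂.1 h1
    exact ⟨x, ⟨a, ha, b, hb, hx⟩, c, hc, hzx⟩

lemma hSum_append (l m : List R) : hSum (l ++ m) = hAddSet (hSum l) (hSum m) := by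
  induction l with
  | nil => rw [List.nil_append]; exact (hAddSet_zero_left _).symm
  | cons x xs ih =>
    show hAddSet {x} (hSum (xs ++ m)) = hAddSet (hAddSet {x} (hSum xs)) (hSum m)
    rw [ih, hAddSet_assoc]

lemma hSum_subset {I : Set R} (hI : IsHyperideal I) {l : List R}
    (h : ∀ x ∈ l, x ∈ I) : hSum l ⊆ I := by
  induction l with
  | nil =>
    intro z hz
    simp only [hSum, Set.mem_singleton_iff] at hz
    subst hz; exact zero_mem' hI
  | cons x xs ih =>
    intro z hz
    rw [show hSum (x :: xs) = hAddSet {x} (hSum xs) from rfl, hAddSet_singleton] at hz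
    obtain ⟨b, hb, hzb⟩ := Set.mem_iUnion₂.1 hz
    exact hI.2.1 x (h x List.mem_cons_self) b
      (ih (fun y hy => h y (List.mem_cons_of_mem _ hy)) hb) hzb

lemma image_hSum_left (r : R) (l : List R) :
    (fun x => r * x) '' hSum l = hSum (l.map fun x => r * x) := by
  induction l with
  | nil => simp [hSum, mul_zero']
  | cons x xs ih =>
    show (fun x => r * x) '' hAddSet {x} (hSum xs)
        = hAddSet {r * x} (hSum (xs.map fun x => r * x))
    rw [hAddSet_singleton, hAddSet_singleton, ← ih, Set.biUnion_image, Set.image_iUnion₂]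
    exact Set.iUnion₂_congr fun b _ => left_distrib' r x b

lemma image_hSum_right (r : R) (l : List R) :
    (fun x => x * r) '' hSum l = hSum (l.map fun x => x * r) := by
  induction l with
  | nil => simp [hSum, zero_mul']
  | cons x xs ih =>
    show (fun x => x * r) '' hAddSet {x} (hSum xs)
        = hAddSet {x * r} (hSum (xs.map fun x => x * r))
    rw [hAddSet_singleton, hAddSet_singleton, ← ih, Set.biUnion_image, Set.image_iUnion₂]
    exact Set.iUnion₂_congr fun b _ => right_distrib' x b r

/-- `R a R`: candidate description of the hyperideal generated by `a`. -/
def genSet (a : R) : Set R :=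
  ⋃ (l : List (R × R)) (_ : l ≠ []), hSum (l.map fun p => p.1 * a * p.2)

lemma mem_genSet {a z : R} :
    z ∈ genSet a ↔ ∃ l : List (R × R), l ≠ [] ∧ z ∈ hSum (l.map fun p => p.1 * a * p.2) := by
  simp [genSet]

lemma genSet_isHyperideal (one : R) (hone : ∀ x : R, one * x = x ∧ x * one = x) (a : R) :
    IsHyperideal (genSet a) ∧ a ∈ genSet a := by
  have hmem : a ∈ genSet a := by
    refine mem_genSet.2 ⟨[(one, one)], by simp, ?_⟩
    have : one * a * one = a := by rw [(hone a).1, (hone a).2]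
    simp [this, hSum_singleton]
  refine ⟨⟨⟨a, hmem⟩, ?_, ?_⟩, hmem⟩
  · intro x hx y hy
    obtain ⟨l, hl, hxl⟩ := mem_genSet.1 hx
    obtain ⟨m, hm, hym⟩ := mem_genSet.1 hy
    intro z hz
    refine mem_genSet.2 ⟨l ++ m, by simp [hl], ?_⟩
    rw [List.map_append, hSum_append]
    exact mem_hAddSet.2 ⟨x, hxl, y, hym, hz⟩
  · intro x hx r
    obtain ⟨l, hl, hxl⟩ := mem_genSet.1 hx
    constructor
    · refine mem_genSet.2 ⟨l.map fun p => (r * p.1, p.2), by simp [hl], ?_⟩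
      have hlist : ((l.map fun p => (r * p.1, p.2)).map fun p => p.1 * a * p.2)
          = (l.map fun p => p.1 * a * p.2).map fun x => r * x := by
        simp [List.map_map, Function.comp, mul_assoc']
      rw [hlist, ← image_hSum_left]
      exact Set.mem_image_of_mem _ hxl
    · refine mem_genSet.2 ⟨l.map fun p => (p.1, p.2 * r), by simp [hl], ?_⟩
      have hlist : ((l.map fun p => (p.1, p.2 * r)).map fun p => p.1 * a * p.2)
          = (l.map fun p => p.1 * a * p.2).map fun x => x * r := by
        simp [List.map_map, Function.comp, mul_assoc']
      rw [hlist, ← image_hSum_right]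
      exact Set.mem_image_of_mem _ hxl

lemma genHyperideal_subset_genSet (one : R) (hone : ∀ x : R, one * x = x ∧ x * one = x)
    (a : R) : genHyperideal a ⊆ genSet a :=
  Set.sInter_subset_of_mem ⟨(genSet_isHyperideal one hone a).1,
    (genSet_isHyperideal one hone a).2⟩

lemma genHyperideal_isHyperideal (one : R) (hone : ∀ x : R, one * x = x ∧ x * one = x)
    (a : R) : IsHyperideal (genHyperideal a) ∧ a ∈ genHyperideal a := by
  have hmem : a ∈ genHyperideal a := fun J hJ => hJ.2
  refine ⟨⟨⟨a, hmem⟩, ?_, ?_⟩, hmem⟩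
  · intro x hx y hy z hz J hJ
    exact hJ.1.2.1 x (hx J hJ) y (hy J hJ) hz
  · intro x hx r
    exact ⟨fun J hJ => (hJ.1.2.2 x (hx J hJ) r).1, fun J hJ => (hJ.1.2.2 x (hx J hJ) r).2⟩

lemma mul_mem_hProd {A B : Set R} {x y : R} (hx : x ∈ A) (hy : y ∈ B) :
    x * y ∈ hProd A B := by
  simp only [hProd, Set.mem_iUnion]
  exact ⟨[(x, y)], by simp, by simp [hx, hy], by simp [hSum_singleton]⟩

lemma key_mul_mem {I : Set R} (hI : IsHyperideal I) {a b : R}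
    (hr : ∀ r : R, a * r * b ∈ I) {x y : R}
    (hx : x ∈ genSet a) (hy : y ∈ genSet b) : x * y ∈ I := by
  obtain ⟨l, hl, hxl⟩ := mem_genSet.1 hx
  obtain ⟨m, hm, hym⟩ := mem_genSet.1 hy
  have hxy : x * y ∈ hSum ((l.map fun p => p.1 * a * p.2).map fun w => w * y) := by
    rw [← image_hSum_right]
    exact Set.mem_image_of_mem _ hxl
  refine hSum_subset hI ?_ hxy
  intro z hz
  obtain ⟨c, hc, rfl⟩ := List.mem_map.1 hz
  obtain ⟨p, hp, rfl⟩ := List.mem_map.1 hc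
  -- goal : (p.1 * a * p.2) * y ∈ I
  have h2 : (p.1 * a * p.2) * y
      ∈ hSum ((m.map fun q => q.1 * b * q.2).map fun w => (p.1 * a * p.2) * w) := by
    rw [← image_hSum_left]
    exact Set.mem_image_of_mem _ hym
  refine hSum_subset hI ?_ h2
  intro w hw
  obtain ⟨d, hd, rfl⟩ := List.mem_map.1 hw
  obtain ⟨q, hq, rfl⟩ := List.mem_map.1 hd
  have heq : p.1 * a * p.2 * (q.1 * b * q.2)
      = p.1 * (a * (p.2 * q.1) * b) * q.2 := by
    simp only [mul_assoc']
  rw [heq]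
  have h3 : a * (p.2 * q.1) * b ∈ I := hr _
  exact (hI.2.2 _ (hI.2.2 _ h3 p.1).1 q.2).2

end Semihyperring

open Semihyperring

/-- characterizations of prime hyperideals in a semihyperring with identity. -/
theorem prime_hyperideal_tfae {R : Type*} [Semihyperring R]
    (one : R) (hone : ∀ x : R, one * x = x ∧ x * one = x)
    (I : Set R) (hI : IsHyperideal I) :
    List.TFAE [
      IsPrimeHyperideal I,
      ∀ a b : R, (∀ r : R, a * r * b ∈ I) ↔ (a ∈ I ∨ b ∈ I),
      ∀ a b : R, hProd (genHyperideal a) (genHyperideal b) ⊆ I → a ∈ I ∨ b ∈ I ] := by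
  tfae_have 1 → 3 := by
    intro h1 a b hab
    obtain ⟨hIa, ha⟩ := genHyperideal_isHyperideal one hone a
    obtain ⟨hIb, hb⟩ := genHyperideal_isHyperideal one hone b
    rcases h1.2 _ _ hIa hIb hab with h | h
    · exact Or.inl (h ha)
    · exact Or.inr (h hb)
  tfae_have 3 → 2 := by
    intro h3 a b
    constructor
    · intro hr
      refine h3 a b ?_
      intro z hz
      simp only [hProd, Set.mem_iUnion] at hz
      obtain ⟨l, hl, hmem, hz⟩ := hz
      refine hSum_subset hI ?_ hz
      intro w hw
      obtain ⟨p, hp, rfl⟩ := List.mem_map.1 hw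
      exact key_mul_mem hI hr
        (genHyperideal_subset_genSet one hone a (hmem p hp).1)
        (genHyperideal_subset_genSet one hone b (hmem p hp).2)
    · rintro (h | h) r
      · exact (hI.2.2 _ (hI.2.2 a h r).2 b).2
      · rw [mul_assoc']
        exact (hI.2.2 _ (hI.2.2 b h r).1 a).1
  tfae_have 2 → 1 := by
    intro h2
    refine ⟨hI, ?_⟩
    intro A B hA hB hsub
    by_contra hcon
    push_neg at hcon
    obtain ⟨a, ha, haI⟩ := Set.not_subset.1 hcon.1
    obtain ⟨b, hb, hbI⟩ := Set.not_subset.1 hcon.2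
    have : ∀ r : R, a * r * b ∈ I := fun r =>
      hsub (mul_mem_hProd ((hA.2.2 a ha r).2) hb)
    rcases (h2 a b).1 this with h | h
    · exact haI h
    · exact hbI h
  tfae_finish
end

section
/- Let R be a semihyperring and let I be a hyperideal of R. Then I is a prime hyperideal if and only if I is semiprime and strongly irreducible. -/
open Semihyperring

lemma zero_mem_of_isHyperideal {R : Type*} [Semihyperring R] {I : Set R}
    (hI : IsHyperideal I) : (0 : R) ∈ I := by
  obtain ⟨⟨a, ha⟩, _, hmul⟩ := hI
  have := (hmul a ha 0).2
  rwa [Semihyperring.mul_zero'] at this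

lemma hSum_subset_of_isHyperideal {R : Type*} [Semihyperring R] {I : Set R}
    (hI : IsHyperideal I) : ∀ l : List R, (∀ x ∈ l, x ∈ I) → hSum l ⊆ I := by
  intro l
  induction l with
  | nil =>
    intro _ y hy
    simp only [hSum, Set.mem_singleton_iff] at hy
    subst hy
    exact zero_mem_of_isHyperideal hI
  | cons x xs ih =>
    intro h y hy
    simp only [hSum, hAddSet, Set.mem_iUnion, Set.mem_singleton_iff] at hy
    obtain ⟨a, rfl, b, hb, hyb⟩ := hy
    exact hI.2.1 a (h a List.mem_cons_self) b
      (ih (fun z hz => h z (List.mem_cons_of_mem a hz)) hb) hyb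

lemma hProd_mono {R : Type*} [Semihyperring R] {A A' B B' : Set R}
    (hA : A ⊆ A') (hB : B ⊆ B') : hProd A B ⊆ hProd A' B' := by
  intro y hy
  simp only [hProd, Set.mem_iUnion] at hy ⊢
  obtain ⟨l, hl, hmem, hy⟩ := hy
  exact ⟨l, hl, fun p hp => ⟨hA (hmem p hp).1, hB (hmem p hp).2⟩, hy⟩

lemma hProd_subset_inter {R : Type*} [Semihyperring R] {H K : Set R}
    (hH : IsHyperideal H) (hK : IsHyperideal K) : hProd H K ⊆ H ∩ K := by
  intro y hy
  simp only [hProd, Set.mem_iUnion] at hy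
  obtain ⟨l, _, hmem, hy⟩ := hy
  constructor
  · refine hSum_subset_of_isHyperideal hH _ ?_ hy
    intro x hx
    simp only [List.mem_map] at hx
    obtain ⟨p, hp, rfl⟩ := hx
    exact (hH.2.2 p.1 (hmem p hp).1 p.2).2
  · refine hSum_subset_of_isHyperideal hK _ ?_ hy
    intro x hx
    simp only [List.mem_map] at hx
    obtain ⟨p, hp, rfl⟩ := hx
    exact (hK.2.2 p.2 (hmem p hp).2 p.1).1

lemma isHyperideal_inter {R : Type*} [Semihyperring R] {H K : Set R}
    (hH : IsHyperideal H) (hK : IsHyperideal K) : IsHyperideal (H ∩ K) := by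
  refine ⟨⟨0, zero_mem_of_isHyperideal hH, zero_mem_of_isHyperideal hK⟩, ?_, ?_⟩
  · intro a ha b hb
    exact Set.subset_inter (hH.2.1 a ha.1 b hb.1) (hK.2.1 a ha.2 b hb.2)
  · intro a ha r
    exact ⟨⟨(hH.2.2 a ha.1 r).1, (hK.2.2 a ha.2 r).1⟩,
      ⟨(hH.2.2 a ha.1 r).2, (hK.2.2 a ha.2 r).2⟩⟩

/-- a hyperideal is prime iff it is semiprime and strongly irreducible. -/
theorem prime_iff_semiprime_and_stronglyIrreducible {R : Type*} [Semihyperring R]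
    (I : Set R) (hI : IsHyperideal I) :
    IsPrimeHyperideal I ↔
      IsSemiprimeHyperideal I ∧ IsStronglyIrreducibleHyperideal I := by
  constructor
  · intro hP
    refine ⟨⟨hI, fun H hH hsub => (hP.2 H H hH hH hsub).elim id id⟩, hI, ?_⟩
    intro H K hH hK hsub
    exact hP.2 H K hH hK ((hProd_subset_inter hH hK).trans hsub)
  · rintro ⟨hsp, hsi⟩
    refine ⟨hI, ?_⟩
    intro A B hA hB hAB
    have hABi : IsHyperideal (A ∩ B) := isHyperideal_inter hA hB
    have h1 : hProd (A ∩ B) (A ∩ B) ⊆ I :=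
      (hProd_mono Set.inter_subset_left Set.inter_subset_right).trans hAB
    exact hsi.2 A B hA hB (hsp.2 (A ∩ B) hABi h1)
end
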